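/- With Σ_τ(L,U) as above and L, U of class (D), the essential supremum τ̊ := ess sup Σ_τ(L,U) is a stopping time, and there exists a nondecreasing sequence (σ_k) ⊂ Σ_τ(L,U) with σ_k ↗ τ̊ almost surely. -/

import Mathlib

open MeasureTheory Filter Set Topology
open scoped Classical

/-- The family `Σ_τ(L,U)` of stopping times `σ` with `τ ≤ σ ≤ T` such that some
(abstract) càdlàg semimartingale lies between the barriers `L` and `U` on `[τ, σ]`. -/
def SigmaSet {Ω : Type*} {m : MeasurableSpace Ω} (𝓕 : Filtration ℝ m)
    (Sem : (ℝ → Ω → ℝ) → Prop) (L U : ℝ → Ω → ℝ) (T : ℝ) (τ : Ω → ℝ) :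
    Set (Ω → ℝ) :=
  {σ | IsStoppingTime 𝓕 (fun ω => (σ ω : WithTop ℝ)) ∧ (∀ ω, τ ω ≤ σ ω ∧ σ ω ≤ T) ∧
    ∃ X : ℝ → Ω → ℝ, Sem X ∧
      ∀ ω, ∀ t ∈ Set.Icc (τ ω) (σ ω), L t ω ≤ X t ω ∧ X t ω ≤ U t ω}

/-- A process `X` is of class (D) on `[0,T]`: the family `{X_σ}` over stopping
times `σ ≤ T` is uniformly integrable. -/
def ClassD {Ω : Type*} {m : MeasurableSpace Ω} (𝓕 : Filtration ℝ m) (T : ℝ)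
    (μ : Measure Ω) (X : ℝ → Ω → ℝ) : Prop :=
  UniformIntegrable
    (fun σ : {σ : Ω → ℝ // IsStoppingTime 𝓕 (fun ω => (σ ω : WithTop ℝ)) ∧ ∀ ω, 0 ≤ σ ω ∧ σ ω ≤ T} =>
      fun ω => X (σ.1 ω) ω) 1 μ

/-- `Σ_τ(L,U)` is closed under pairwise maximization. -/
lemma sigmaSet_max_mem {Ω : Type*} {m : MeasurableSpace Ω} (𝓕 : Filtration ℝ m)
    (Sem : (ℝ → Ω → ℝ) → Prop)
    (hSemAdd : ∀ X Y : ℝ → Ω → ℝ, Sem X → Sem Y → Sem (fun t ω => X t ω + Y t ω))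
    (hSemNeg : ∀ X : ℝ → Ω → ℝ, Sem X → Sem (fun t ω => - X t ω))
    (hSemMax : ∀ X Y : ℝ → Ω → ℝ, Sem X → Sem Y →
      Sem (fun t ω => max (X t ω) (Y t ω)))
    (hSemStop : ∀ (X : ℝ → Ω → ℝ) (ν ρ : Ω → ℝ), IsStoppingTime 𝓕 (fun ω => (ρ ω : WithTop ℝ)) → Sem X →
      Sem (fun t ω => if t < ρ ω then X (max t (ν ω)) ω else 0))
    (hSemJump : ∀ (X : ℝ → Ω → ℝ) (ρ : Ω → ℝ) (c : Ω → ℝ),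
      IsStoppingTime 𝓕 (fun ω => (ρ ω : WithTop ℝ)) → Sem X →
      Sem (fun t ω => X t ω + (if ρ ω ≤ t then c ω else 0)))
    (L U : ℝ → Ω → ℝ) (hLU : ∀ t ω, L t ω ≤ U t ω)
    (hLdom : ∃ N : ℝ → Ω → ℝ, Sem N ∧ ∀ t ω, 0 ≤ L t ω + N t ω)
    (T : ℝ) (τ : Ω → ℝ)
    {σ σ' : Ω → ℝ} (hσ : σ ∈ SigmaSet 𝓕 Sem L U T τ)
    (hσ' : σ' ∈ SigmaSet 𝓕 Sem L U T τ) :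
    (fun ω => max (σ ω) (σ' ω)) ∈ SigmaSet 𝓕 Sem L U T τ := by
  obtain ⟨hst, hbd, X, hX, hXbd⟩ := hσ
  obtain ⟨hst', hbd', X', hX', hXbd'⟩ := hσ'
  obtain ⟨N, hN, hNpos⟩ := hLdom
  set ρ : Ω → ℝ := fun ω => max (σ ω) (σ' ω) with hρdef
  have hρ : IsStoppingTime 𝓕 (fun ω => (ρ ω : WithTop ℝ)) := by
    simp only [hρdef, WithTop.coe_max]; exact hst.max hst'
  refine ⟨hρ, fun ω => ⟨le_max_of_le_left (hbd ω).1, max_le (hbd ω).2 (hbd' ω).2⟩, ?_⟩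
  -- the sandwiched process
  set XN : ℝ → Ω → ℝ := fun t ω => X t ω + N t ω with hXNdef
  set XN' : ℝ → Ω → ℝ := fun t ω => X' t ω + N t ω with hXN'def
  set A : ℝ → Ω → ℝ := fun t ω => if t < σ ω then XN (max t (τ ω)) ω else 0 with hAdef
  set B : ℝ → Ω → ℝ := fun t ω => if t < σ' ω then XN' (max t (τ ω)) ω else 0 with hBdef
  set M : ℝ → Ω → ℝ := fun t ω => max (A t ω) (B t ω) with hMdef
  set c : Ω → ℝ := fun ω => L (ρ ω) ω + N (ρ ω) ω with hcdef
  set J : ℝ → Ω → ℝ := fun t ω => M t ω + (if ρ ω ≤ t then c ω else 0) with hJdef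
  refine ⟨fun t ω => J t ω + (- N t ω), ?_, ?_⟩
  · exact hSemAdd J (fun t ω => - N t ω)
      (hSemJump M ρ c hρ
        (hSemMax A B (hSemStop XN τ σ hst (hSemAdd X N hX hN))
          (hSemStop XN' τ σ' hst' (hSemAdd X' N hX' hN))))
      (hSemNeg N hN)
  · rintro ω t ⟨ht1, ht2⟩
    show L t ω ≤ J t ω + - N t ω ∧ J t ω + - N t ω ≤ U t ω
    have hmaxt : max t (τ ω) = t := max_eq_left ht1
    rcases lt_or_eq_of_le ht2 with hlt | heq
    · -- t < ρ ω : no jump yet, and at least one of the killed processes is alive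
      have hnj : ¬ ρ ω ≤ t := not_le.mpr hlt
      have hJt : J t ω = max (A t ω) (B t ω) := by
        simp only [hJdef, hMdef, if_neg hnj, add_zero]
      have hUN0 : 0 ≤ U t ω + N t ω :=
        le_trans (hNpos t ω) (by linarith [hLU t ω])
      have hA_le : A t ω ≤ U t ω + N t ω := by
        by_cases h1 : t < σ ω
        · have hb := hXbd ω t ⟨ht1, h1.le⟩
          simp only [hAdef, if_pos h1, hmaxt, hXNdef]
          linarith [hb.2]
        · simp only [hAdef, if_neg h1]; exact hUN0
      have hB_le : B t ω ≤ U t ω + N t ω := by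
        by_cases h2 : t < σ' ω
        · have hb := hXbd' ω t ⟨ht1, h2.le⟩
          simp only [hBdef, if_pos h2, hmaxt, hXN'def]
          linarith [hb.2]
        · simp only [hBdef, if_neg h2]; exact hUN0
      have hlow : L t ω + N t ω ≤ max (A t ω) (B t ω) := by
        rcases lt_max_iff.mp hlt with h1 | h2
        · refine le_trans ?_ (le_max_left _ _)
          have hb := hXbd ω t ⟨ht1, h1.le⟩
          simp only [hAdef, if_pos h1, hmaxt, hXNdef]
          linarith [hb.1]
        · refine le_trans ?_ (le_max_right _ _)
          have hb := hXbd' ω t ⟨ht1, h2.le⟩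
          simp only [hBdef, if_pos h2, hmaxt, hXN'def]
          linarith [hb.1]
      constructor
      · rw [hJt]; linarith
      · rw [hJt]; have := max_le hA_le hB_le; linarith
    · -- t = ρ ω : both killed processes are 0, the jump restores the value L
      have h1 : ¬ t < σ ω := not_lt.mpr (heq ▸ le_max_left _ _)
      have h2 : ¬ t < σ' ω := not_lt.mpr (heq ▸ le_max_right _ _)
      have hj : ρ ω ≤ t := heq.ge
      have : J t ω = L (ρ ω) ω + N (ρ ω) ω := by
        simp only [hJdef, hMdef, hAdef, hBdef, if_neg h1, if_neg h2, if_pos hj,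
          max_self, hcdef, zero_add]
      rw [this, ← heq]
      constructor
      · linarith
      · have := hLU t ω; linarith

/-- with `L, U` of class (D), the essential supremum
`τ̊ = ess sup Σ_τ(L,U)` is a stopping time and is the a.s. limit of a
nondecreasing sequence of elements of `Σ_τ(L,U)`. -/
theorem essSup_sigmaSet_stoppingTime
    {Ω : Type*} {m : MeasurableSpace Ω} (μ : Measure Ω) [IsProbabilityMeasure μ]
    (𝓕 : Filtration ℝ m) (T : ℝ) (hT : 0 < T)
    (Sem : (ℝ → Ω → ℝ) → Prop)
    (hSemAdd : ∀ X Y : ℝ → Ω → ℝ, Sem X → Sem Y → Sem (fun t ω => X t ω + Y t ω))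
    (hSemNeg : ∀ X : ℝ → Ω → ℝ, Sem X → Sem (fun t ω => - X t ω))
    (hSemMax : ∀ X Y : ℝ → Ω → ℝ, Sem X → Sem Y →
      Sem (fun t ω => max (X t ω) (Y t ω)))
    (hSemStop : ∀ (X : ℝ → Ω → ℝ) (ν ρ : Ω → ℝ), IsStoppingTime 𝓕 (fun ω => (ρ ω : WithTop ℝ)) → Sem X →
      Sem (fun t ω => if t < ρ ω then X (max t (ν ω)) ω else 0))
    (hSemJump : ∀ (X : ℝ → Ω → ℝ) (ρ : Ω → ℝ) (c : Ω → ℝ),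
      IsStoppingTime 𝓕 (fun ω => (ρ ω : WithTop ℝ)) → Sem X →
      Sem (fun t ω => X t ω + (if ρ ω ≤ t then c ω else 0)))
    (L U : ℝ → Ω → ℝ) (hLU : ∀ t ω, L t ω ≤ U t ω)
    (hLD : ClassD 𝓕 T μ L) (hUD : ClassD 𝓕 T μ U)
    (hLdom : ∃ N : ℝ → Ω → ℝ, Sem N ∧ ∀ t ω, 0 ≤ L t ω + N t ω)
    (τ : Ω → ℝ) (hτ : IsStoppingTime 𝓕 (fun ω => (τ ω : WithTop ℝ))) (hτ0 : ∀ ω, 0 ≤ τ ω) (hτT : ∀ ω, τ ω ≤ T)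
    (hne : (SigmaSet 𝓕 Sem L U T τ).Nonempty)
    (σstar : Ω → ℝ)
    (hub : ∀ σ ∈ SigmaSet 𝓕 Sem L U T τ, ∀ᵐ ω ∂μ, σ ω ≤ σstar ω)
    (hlub : ∀ g : Ω → ℝ, (∀ σ ∈ SigmaSet 𝓕 Sem L U T τ, ∀ᵐ ω ∂μ, σ ω ≤ g ω) →
      ∀ᵐ ω ∂μ, σstar ω ≤ g ω)
    (hcomplete : ∀ f g : Ω → ℝ, (∀ᵐ ω ∂μ, f ω = g ω) →
      IsStoppingTime 𝓕 (fun ω => (f ω : WithTop ℝ)) → IsStoppingTime 𝓕 (fun ω => (g ω : WithTop ℝ))) :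
    IsStoppingTime 𝓕 (fun ω => (σstar ω : WithTop ℝ)) ∧
    ∃ σs : ℕ → Ω → ℝ, (∀ k, σs k ∈ SigmaSet 𝓕 Sem L U T τ) ∧
      (∀ k ω, σs k ω ≤ σs (k + 1) ω) ∧
      ∀ᵐ ω ∂μ, Tendsto (fun k => σs k ω) atTop (𝓝 (σstar ω)) := by
  set S := SigmaSet 𝓕 Sem L U T τ with hSdef
  have hmaxS : ∀ {σ σ' : Ω → ℝ}, σ ∈ S → σ' ∈ S →
      (fun ω => max (σ ω) (σ' ω)) ∈ S := by
    intro σ σ' hσ hσ'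
    exact sigmaSet_max_mem 𝓕 Sem hSemAdd hSemNeg hSemMax hSemStop hSemJump
      L U hLU hLdom T τ hσ hσ'
  -- basic facts about elements of S
  have hS0 : ∀ σ ∈ S, ∀ ω, 0 ≤ σ ω := fun σ hσ ω => (hτ0 ω).trans (hσ.2.1 ω).1
  have hST : ∀ σ ∈ S, ∀ ω, σ ω ≤ T := fun σ hσ ω => (hσ.2.1 ω).2
  have hmS : ∀ σ ∈ S, Measurable σ := fun σ hσ =>
    measurable_of_Iic fun x => by
      have := 𝓕.le x _ (hσ.1 x); simp only [WithTop.coe_le_coe] at this; exact this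
  have hint : ∀ σ ∈ S, Integrable σ μ := by
    intro σ hσ
    have hm : Measurable σ := hmS σ hσ
    refine Integrable.mono' (integrable_const T) hm.aestronglyMeasurable
      (ae_of_all _ fun ω => ?_)
    rw [Real.norm_eq_abs, abs_of_nonneg (hS0 σ hσ ω)]
    exact hST σ hσ ω
  -- the supremum of expectations over S
  set I : Set ℝ := (fun σ : Ω → ℝ => ∫ ω, σ ω ∂μ) '' S with hIdef
  have hInonempty : I.Nonempty := hne.image _
  have hIbdd : BddAbove I := by
    refine ⟨T, ?_⟩
    rintro x ⟨σ, hσ, rfl⟩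
    calc ∫ ω, σ ω ∂μ ≤ ∫ _, T ∂μ :=
          integral_mono (hint σ hσ) (integrable_const T) (fun ω => hST σ hσ ω)
      _ = T := by simp
  set s := sSup I with hsdef
  obtain ⟨a, hamono, halim, hamem⟩ := exists_seq_tendsto_sSup hInonempty hIbdd
  choose φ hφS hφa using fun n => hamem n
  -- make the sequence nondecreasing via maxima
  obtain ⟨σs, hσs0, hσsS⟩ :
      ∃ σs : ℕ → Ω → ℝ, σs 0 = φ 0 ∧
        ∀ n, σs (n + 1) = fun ω => max (σs n ω) (φ (n + 1) ω) :=
    ⟨fun n => Nat.rec (φ 0) (fun n prev => fun ω => max (prev ω) (φ (n + 1) ω)) n,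
      rfl, fun n => rfl⟩
  have hσsmem : ∀ n, σs n ∈ S := by
    intro n
    induction n with
    | zero => rw [hσs0]; exact hφS 0
    | succ n ih => rw [hσsS n]; exact hmaxS ih (hφS (n + 1))
  have hσsmono : ∀ n ω, σs n ω ≤ σs (n + 1) ω := by
    intro n ω; rw [hσsS n]; exact le_max_left _ _
  have hσsmono' : ∀ ω, Monotone fun n => σs n ω := by
    intro ω; exact monotone_nat_of_le_succ fun n => hσsmono n ω
  have hφle : ∀ n ω, φ n ω ≤ σs n ω := by
    intro n ω
    cases n with
    | zero => rw [hσs0]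
    | succ n => rw [hσsS n]; exact le_max_right _ _
  -- the pointwise limit σinf
  set σinf : Ω → ℝ := fun ω => ⨆ n, σs n ω with hσinfdef
  have hbdd : ∀ ω, BddAbove (Set.range fun n => σs n ω) := by
    intro ω
    exact ⟨T, by rintro x ⟨n, rfl⟩; exact hST _ (hσsmem n) ω⟩
  have htend : ∀ ω, Tendsto (fun n => σs n ω) atTop (𝓝 (σinf ω)) := by
    intro ω; exact tendsto_atTop_ciSup (hσsmono' ω) (hbdd ω)
  have hσinfle : ∀ n ω, σs n ω ≤ σinf ω := fun n ω => le_ciSup (hbdd ω) n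
  have hσinfT : ∀ ω, σinf ω ≤ T := by
    intro ω
    exact ciSup_le fun n => hST _ (hσsmem n) ω
  have hσinf0 : ∀ ω, 0 ≤ σinf ω := fun ω => (hS0 _ (hσsmem 0) ω).trans (hσinfle 0 ω)
  -- σinf is a stopping time
  have hσinfst : IsStoppingTime 𝓕 (fun ω => (σinf ω : WithTop ℝ)) := by
    intro t
    have : {ω | (σinf ω : WithTop ℝ) ≤ t} = ⋂ n, {ω | (σs n ω : WithTop ℝ) ≤ t} := by
      ext ω
      simp only [Set.mem_setOf_eq, Set.mem_iInter, hσinfdef, WithTop.coe_le_coe]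
      exact ciSup_le_iff (hbdd ω)
    rw [this]
    exact MeasurableSet.iInter fun n => (hσsmem n).1 t
  -- measurability of σinf
  have hσinfm : Measurable σinf :=
    measurable_of_Iic fun x => by
      have := 𝓕.le x _ (hσinfst x); simp only [WithTop.coe_le_coe] at this; exact this
  have hσinfmeas : AEStronglyMeasurable σinf μ :=
    hσinfm.aestronglyMeasurable
  have hσinfint : Integrable σinf μ := by
    refine Integrable.mono' (integrable_const T) hσinfmeas (ae_of_all _ fun ω => ?_)
    rw [Real.norm_eq_abs, abs_of_nonneg (hσinf0 ω)]
    exact hσinfT ω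
  -- ∫ σs n → ∫ σinf
  have hIconv : Tendsto (fun n => ∫ ω, σs n ω ∂μ) atTop (𝓝 (∫ ω, σinf ω ∂μ)) := by
    refine tendsto_integral_of_dominated_convergence (fun _ => T)
      (fun n => (hmS _ (hσsmem n)).aestronglyMeasurable)
      (integrable_const T) (fun n => ae_of_all _ fun ω => ?_)
      (ae_of_all _ htend)
    rw [Real.norm_eq_abs, abs_of_nonneg (hS0 _ (hσsmem n) ω)]
    exact hST _ (hσsmem n) ω
  -- ∫ σs n → s by squeeze
  have hIconv' : Tendsto (fun n => ∫ ω, σs n ω ∂μ) atTop (𝓝 s) := by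
    refine tendsto_of_tendsto_of_tendsto_of_le_of_le halim tendsto_const_nhds
      (fun n => ?_) (fun n => ?_)
    · rw [← hφa n]
      exact integral_mono (hint _ (hφS n)) (hint _ (hσsmem n)) (hφle n)
    · exact le_csSup hIbdd ⟨σs n, hσsmem n, rfl⟩
  have hs_eq : ∫ ω, σinf ω ∂μ = s := tendsto_nhds_unique hIconv hIconv'
  -- σinf is an a.e. upper bound for S
  have hσinfub : ∀ σ ∈ S, ∀ᵐ ω ∂μ, σ ω ≤ σinf ω := by
    intro σ hσ
    set g : Ω → ℝ := fun ω => max (σ ω) (σinf ω) with hgdef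
    have hgmeas : AEStronglyMeasurable g μ :=
      ((hmS σ hσ).max hσinfm).aestronglyMeasurable
    have hgint : Integrable g μ := by
      refine Integrable.mono' (integrable_const T) hgmeas (ae_of_all _ fun ω => ?_)
      rw [Real.norm_eq_abs, abs_of_nonneg (le_trans (hS0 σ hσ ω) (le_max_left _ _))]
      exact max_le (hST σ hσ ω) (hσinfT ω)
    have hgconv : Tendsto (fun n => ∫ ω, max (σ ω) (σs n ω) ∂μ) atTop
        (𝓝 (∫ ω, g ω ∂μ)) := by
      refine tendsto_integral_of_dominated_convergence (fun _ => T)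
        (fun n => ((hmS σ hσ).max (hmS _ (hσsmem n))).aestronglyMeasurable)
        (integrable_const T) (fun n => ae_of_all _ fun ω => ?_)
        (ae_of_all _ fun ω => Tendsto.max tendsto_const_nhds (htend ω))
      rw [Real.norm_eq_abs,
        abs_of_nonneg (le_trans (hS0 σ hσ ω) (le_max_left _ _))]
      exact max_le (hST σ hσ ω) (hST _ (hσsmem n) ω)
    have hg_le_s : ∫ ω, g ω ∂μ ≤ s := by
      refine le_of_tendsto hgconv (Filter.Eventually.of_forall fun n => ?_)
      exact le_csSup hIbdd ⟨_, hmaxS hσ (hσsmem n), rfl⟩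
    have hs_le_g : s ≤ ∫ ω, g ω ∂μ := by
      rw [← hs_eq]
      exact integral_mono hσinfint hgint fun ω => le_max_right _ _
    have hzero : ∫ ω, (g ω - σinf ω) ∂μ = 0 := by
      rw [integral_sub hgint hσinfint, hs_eq]
      linarith
    have hae0 : (fun ω => g ω - σinf ω) =ᵐ[μ] 0 := by
      rw [← integral_eq_zero_iff_of_nonneg (fun ω => sub_nonneg.mpr (le_max_right _ _))
        (hgint.sub hσinfint)]
      exact hzero
    filter_upwards [hae0] with ω hω
    have : g ω = σinf ω := by
      have : g ω - σinf ω = 0 := hω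
      linarith
    calc σ ω ≤ g ω := le_max_left _ _
      _ = σinf ω := this
  -- σstar = σinf a.e.
  have hstar_le : ∀ᵐ ω ∂μ, σstar ω ≤ σinf ω := hlub σinf hσinfub
  have hle_star : ∀ᵐ ω ∂μ, σinf ω ≤ σstar ω := by
    have h := ae_all_iff.mpr fun n => hub (σs n) (hσsmem n)
    filter_upwards [h] with ω hω
    exact ciSup_le hω
  have hae_eq : ∀ᵐ ω ∂μ, σinf ω = σstar ω := by
    filter_upwards [hstar_le, hle_star] with ω h1 h2
    exact le_antisymm h2 h1
  refine ⟨hcomplete σinf σstar hae_eq hσinfst, σs, hσsmem, hσsmono, ?_⟩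
  filter_upwards [hae_eq] with ω hω
  rw [← hω]
  exact htend ω
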